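/- Let f, g ∈ ℂ[z] be polynomials, not both zero, and let n = max(deg f, deg g). Then the dimension of the kernel of the n×n Bezoutian matrix B = H_f·T_g − H_g·T_f (as a linear map ℂⁿ → ℂⁿ) equals the degree of gcd(f, g). -/

import Mathlib

open Polynomial Matrix

/-- The `n × n` Hankel matrix of a polynomial `f`: `(H_f)_{jk} = f_{j+k+1}`. -/
noncomputable def Hk (n : ℕ) (f : ℂ[X]) : Matrix (Fin n) (Fin n) ℂ :=
  Matrix.of fun j k => f.coeff ((j : ℕ) + (k : ℕ) + 1)

/-- The `n × n` upper triangular Toeplitz matrix of a polynomial `f`: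
`(T_f)_{jk} = f_{k-j}` if `k ≥ j`, and `0` otherwise. -/
noncomputable def Tp (n : ℕ) (f : ℂ[X]) : Matrix (Fin n) (Fin n) ℂ :=
  Matrix.of fun j k => if (j : ℕ) ≤ (k : ℕ) then f.coeff ((k : ℕ) - (j : ℕ)) else 0

/-- The `n × n` reverse identity matrix `Z`. -/
noncomputable def Rv (n : ℕ) : Matrix (Fin n) (Fin n) ℂ :=
  Matrix.of fun j k => if (j : ℕ) + (k : ℕ) = n - 1 then 1 else 0

/-- The `n × n` Bezoutian matrix of `f` and `g`: `B = H_f T_g - H_g T_f`. -/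
noncomputable def Bz (n : ℕ) (f g : ℂ[X]) : Matrix (Fin n) (Fin n) ℂ :=
  Hk n f * Tp n g - Hk n g * Tp n f

/-- The `2n × 2n` resultant matrix of `f` and `g`:
`R = [[T_f, Z H_f], [T_g, Z H_g]]`. -/
noncomputable def Rs (n : ℕ) (f g : ℂ[X]) : Matrix (Fin n ⊕ Fin n) (Fin n ⊕ Fin n) ℂ :=
  Matrix.fromBlocks (Tp n f) (Rv n * Hk n f) (Tp n g) (Rv n * Hk n g)

section BezoutianAux
open Finset

noncomputable def pol {n : ℕ} (u : Fin n → ℂ) : ℂ[X] :=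
  ∑ i : Fin n, Polynomial.monomial (n - 1 - (i : ℕ)) (u i)

lemma coeff_pol {n : ℕ} (u : Fin n → ℂ) (m : ℕ) :
    (pol u).coeff m = if h : m < n then u ⟨n - 1 - m, by omega⟩ else 0 := by
  rw [pol, finset_sum_coeff]
  split_ifs with h
  · rw [Finset.sum_eq_single (⟨n - 1 - m, by omega⟩ : Fin n)]
    · simp [coeff_monomial, Nat.sub_sub_self, show n - 1 - (n-1-m) = m by omega]
    · intro i _ hi
      rw [coeff_monomial, if_neg]
      intro hc
      exact hi (by ext; simp only []; omega)
    · simp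
  · apply Finset.sum_eq_zero
    intro i _
    rw [coeff_monomial, if_neg]
    have := i.isLt; omega

lemma degree_pol_lt {n : ℕ} (u : Fin n → ℂ) : (pol u).degree < n := by
  rw [degree_lt_iff_coeff_zero]
  intro m hm
  rw [coeff_pol, dif_neg]
  exact fun h => absurd h (by exact_mod_cast not_lt.2 hm)

lemma pol_rev {n : ℕ} (v : ℂ[X]) (hv : v.degree < n) :
    pol (fun i : Fin n => v.coeff (n - 1 - (i : ℕ))) = v := by
  ext m
  rw [coeff_pol]
  split_ifs with h
  · congr 1; simp only [Fin.val_mk]; omega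
  · exact (coeff_eq_zero_of_degree_lt (lt_of_lt_of_le hv (by exact_mod_cast not_lt.1 h))).symm

lemma keyA (f w : ℂ[X]) (n j : ℕ) :
    (f * w).coeff (n + j) =
      (f * (w /ₘ X ^ n)).coeff j +
        ∑ l ∈ Finset.range n, f.coeff (j + l + 1) * w.coeff (n - 1 - l) := by
  have hmono : (X ^ n : ℂ[X]).Monic := monic_X_pow _
  have hdec := modByMonic_add_div w (X ^ n)
  set Q := w /ₘ X ^ n with hQ
  set R := w %ₘ X ^ n with hR
  have hRdeg : R.degree < (n : WithBot ℕ) := by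
    have := degree_modByMonic_lt w hmono
    rwa [degree_X_pow] at this
  have hRcoeff : ∀ m, n ≤ m → R.coeff m = 0 := fun m hm =>
    coeff_eq_zero_of_degree_lt (lt_of_lt_of_le hRdeg (by exact_mod_cast hm))
  have hwc : ∀ m, m < n → w.coeff m = R.coeff m := by
    intro m hm
    conv_lhs => rw [← hdec]
    rw [coeff_add, coeff_X_pow_mul', if_neg (by omega), add_zero]
  have h1 : (f * w).coeff (n + j) = (f * R).coeff (n + j) + (f * Q).coeff j := by
    conv_lhs => rw [← hdec]
    rw [mul_add, coeff_add, ← mul_assoc, mul_comm f (X ^ n : ℂ[X]), mul_assoc,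
      show n + j = j + n from by omega, coeff_X_pow_mul]
  rw [h1, add_comm ((f * R).coeff (n + j))]
  congr 1
  rw [mul_comm f R, coeff_mul, Finset.Nat.sum_antidiagonal_eq_sum_range_succ_mk,
    ← Finset.sum_subset (Finset.range_subset_range.2 (by omega : n ≤ n + j + 1))
      (fun k _ hk => by rw [hRcoeff k (by simpa using hk), zero_mul]),
    ← Finset.sum_range_reflect]
  apply Finset.sum_congr rfl
  intro l hl
  have hln : l < n := Finset.mem_range.1 hl
  rw [← hwc _ (by omega), show n + j - (n - 1 - l) = j + l + 1 from by omega, mul_comm]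


lemma tp_mulVec {n : ℕ} (g : ℂ[X]) (u : Fin n → ℂ) (l : Fin n) :
    (Tp n g).mulVec u l = (g * pol u).coeff (n - 1 - (l : ℕ)) := by
  rw [mulVec, dotProduct, pol, Finset.mul_sum, finset_sum_coeff]
  apply Finset.sum_congr rfl
  intro k _
  rw [← C_mul_X_pow_eq_monomial, ← mul_assoc, coeff_mul_X_pow', Tp]
  simp only [Matrix.of_apply]
  have hk := k.isLt; have hl := l.isLt
  split_ifs with h1 h2 h2
  · rw [coeff_mul_C]
    congr 2
    omega
  · omega
  · omega
  · rw [zero_mul]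

lemma hk_mulVec {n : ℕ} (f : ℂ[X]) (w : Fin n → ℂ) (j : Fin n) :
    (Hk n f).mulVec w j = ∑ l : Fin n, f.coeff ((j : ℕ) + (l : ℕ) + 1) * w l := by
  rw [mulVec, dotProduct]
  rfl

lemma bz_mulVec {n : ℕ} (f g : ℂ[X]) (u : Fin n → ℂ) (j : Fin n) :
    (Bz n f g).mulVec u j =
      (g * ((f * pol u) /ₘ X ^ n) - f * ((g * pol u) /ₘ X ^ n)).coeff j := by
  have hs : ∀ (p q : ℂ[X]),
      ((Hk n p * Tp n q).mulVec u) j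
        = (p * (q * pol u)).coeff (n + j) - (p * ((q * pol u) /ₘ X ^ n)).coeff j := by
    intro p q
    rw [← mulVec_mulVec, hk_mulVec]
    have : ∀ l : Fin n, (Tp n q).mulVec u l = (q * pol u).coeff (n - 1 - (l : ℕ)) :=
      tp_mulVec q u
    calc ∑ l : Fin n, p.coeff ((j : ℕ) + (l : ℕ) + 1) * (Tp n q).mulVec u l
        = ∑ l : Fin n, p.coeff ((j : ℕ) + (l : ℕ) + 1) * (q * pol u).coeff (n - 1 - (l : ℕ)) := by
          apply Finset.sum_congr rfl; intro l _; rw [this l]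
      _ = ∑ l ∈ Finset.range n, p.coeff ((j : ℕ) + l + 1) * (q * pol u).coeff (n - 1 - l) := by
          rw [← Fin.sum_univ_eq_sum_range]
      _ = (p * (q * pol u)).coeff (n + j) - (p * ((q * pol u) /ₘ X ^ n)).coeff j := by
          rw [keyA p (q * pol u) n j]; ring
  rw [Bz, sub_mulVec]
  simp only [Pi.sub_apply, hs]
  rw [show f * (g * pol u) = g * (f * pol u) from by ring, coeff_sub]
  ring

lemma mulprod_coeff_zero {n : ℕ} (p R : ℂ[X]) (hp : p.natDegree ≤ n)
    (hR : R.degree < (n : WithBot ℕ)) {m : ℕ} (hm : 2 * n ≤ m) : (p * R).coeff m = 0 := by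
  rw [coeff_mul]
  apply Finset.sum_eq_zero
  rintro ⟨a, b⟩ hab
  rw [Finset.HasAntidiagonal.mem_antidiagonal] at hab
  simp only
  by_cases ha : a ≤ n
  · rw [coeff_eq_zero_of_degree_lt (lt_of_lt_of_le hR (by exact_mod_cast (by omega : n ≤ b))),
      mul_zero]
  · rw [coeff_eq_zero_of_natDegree_lt (by omega : p.natDegree < a), zero_mul]

lemma mem_ker_iff {n : ℕ} {f g : ℂ[X]} (hf : f.natDegree ≤ n) (hg : g.natDegree ≤ n)
    (u : Fin n → ℂ) :
    (Bz n f g).mulVec u = 0 ↔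
      g * ((f * pol u) /ₘ X ^ n) = f * ((g * pol u) /ₘ X ^ n) := by
  set G := g * ((f * pol u) /ₘ X ^ n) - f * ((g * pol u) /ₘ X ^ n) with hG
  have key : ∀ j : Fin n, (Bz n f g).mulVec u j = G.coeff j := bz_mulVec f g u
  have hmono : (X ^ n : ℂ[X]).Monic := monic_X_pow _
  constructor
  · intro h
    rw [← sub_eq_zero, ← hG]
    have hcoeff_lt : ∀ m, m < n → G.coeff m = 0 := by
      intro m hm
      have h2 := key ⟨m, hm⟩
      rw [h] at h2
      simpa using h2.symm
    set Rf := (f * pol u) %ₘ X ^ n with hRf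
    set Rg := (g * pol u) %ₘ X ^ n with hRg
    have e1 : X ^ n * ((f * pol u) /ₘ X ^ n) = f * pol u - Rf :=
      eq_sub_iff_add_eq.2 (by rw [add_comm]; exact modByMonic_add_div _ _)
    have e2 : X ^ n * ((g * pol u) /ₘ X ^ n) = g * pol u - Rg :=
      eq_sub_iff_add_eq.2 (by rw [add_comm]; exact modByMonic_add_div _ _)
    have hXG : X ^ n * G = f * Rg - g * Rf := by
      rw [hG]
      linear_combination g * e1 - f * e2
    have hRfd : Rf.degree < (n : WithBot ℕ) := by
      have := degree_modByMonic_lt (f * pol u) hmono; rwa [degree_X_pow] at this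
    have hRgd : Rg.degree < (n : WithBot ℕ) := by
      have := degree_modByMonic_lt (g * pol u) hmono; rwa [degree_X_pow] at this
    have hcoeff_ge : ∀ m, n ≤ m → G.coeff m = 0 := by
      intro m hm
      have : G.coeff m = (X ^ n * G).coeff (m + n) := (coeff_X_pow_mul G n m).symm
      rw [this, hXG, coeff_sub,
        mulprod_coeff_zero f Rg hf hRgd (by omega),
        mulprod_coeff_zero g Rf hg hRfd (by omega), sub_self]
    ext m
    rcases lt_or_ge m n with hm | hm
    · rw [hcoeff_lt m hm, coeff_zero]
    · rw [hcoeff_ge m hm, coeff_zero]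
  · intro h
    funext j
    have hG0 : G = 0 := by rw [hG, h, sub_self]
    rw [key j, hG0, coeff_zero]
    rfl

lemma divByMonic_add (p q D : ℂ[X]) (hD : D.Monic) :
    (p + q) /ₘ D = p /ₘ D + q /ₘ D := by
  refine (div_modByMonic_unique (p /ₘ D + q /ₘ D) (p %ₘ D + q %ₘ D) hD ⟨?_, ?_⟩).1
  · linear_combination modByMonic_add_div p _ + modByMonic_add_div q _
  · exact lt_of_le_of_lt (degree_add_le _ _)
      (max_lt (degree_modByMonic_lt _ hD) (degree_modByMonic_lt _ hD))

lemma divByMonic_smul (c : ℂ) (p D : ℂ[X]) (hD : D.Monic) :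
    (c • p) /ₘ D = c • (p /ₘ D) := by
  refine (div_modByMonic_unique (c • (p /ₘ D)) (c • (p %ₘ D)) hD ⟨?_, ?_⟩).1
  · rw [smul_eq_C_mul, smul_eq_C_mul, smul_eq_C_mul]
    linear_combination (C c) * modByMonic_add_div p _
  · exact lt_of_le_of_lt (degree_smul_le _ _) (degree_modByMonic_lt _ hD)

lemma pol_add {n : ℕ} (u v : Fin n → ℂ) : pol (u + v) = pol u + pol v := by
  simp [pol, Finset.sum_add_distrib]

lemma pol_smul {n : ℕ} (c : ℂ) (u : Fin n → ℂ) : pol (c • u) = c • pol u := by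
  simp [pol, Finset.smul_sum, Polynomial.smul_monomial]

lemma pol_eq_zero_iff {n : ℕ} (u : Fin n → ℂ) : pol u = 0 ↔ u = 0 := by
  constructor
  · intro h
    funext i
    have := coeff_pol u (n - 1 - (i : ℕ))
    rw [h, coeff_zero] at this
    have hi := i.isLt
    rw [dif_pos (by omega)] at this
    have h3 : u ⟨n - 1 - (n - 1 - (i:ℕ)), by omega⟩ = 0 := this.symm
    have h2 : (⟨n - 1 - (n - 1 - (i:ℕ)), by omega⟩ : Fin n) = i := by
      ext; simp only [Fin.val_mk]; omega
    rwa [h2] at h3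
  · intro h; rw [h]; simp [pol]

set_option maxHeartbeats 1000000 in
lemma main_count (f g : ℂ[X]) (hf : f ≠ 0) (n : ℕ) (hfn : f.natDegree = n)
    (hgn : g.natDegree ≤ n) :
    Module.finrank ℂ (LinearMap.ker (Matrix.toLin' (Bz n f g))) =
      (EuclideanDomain.gcd f g).natDegree := by
  classical
  set d := EuclideanDomain.gcd f g with hd
  have hd0 : d ≠ 0 := fun h => hf ((EuclideanDomain.gcd_eq_zero_iff.1 h).1)
  set k := d.natDegree with hk
  have hlc : d.leadingCoeff ≠ 0 := leadingCoeff_ne_zero.2 hd0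
  set D : ℂ[X] := d * C d.leadingCoeff⁻¹ with hD
  have hDm : D.Monic := monic_mul_leadingCoeff_inv hd0
  have hD0 : D ≠ 0 := hDm.ne_zero
  have hDd : d = D * C d.leadingCoeff := by
    rw [hD, mul_assoc, ← C_mul, inv_mul_cancel₀ hlc, C_1, mul_one]
  have hDdvf : D ∣ f := dvd_trans ⟨C d.leadingCoeff, hDd⟩ (EuclideanDomain.gcd_dvd_left f g)
  have hDdvg : D ∣ g := dvd_trans ⟨C d.leadingCoeff, hDd⟩ (EuclideanDomain.gcd_dvd_right f g)
  have hDk : D.natDegree = k := by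
    rw [hD, natDegree_mul hd0 (fun h => inv_ne_zero hlc (by simpa using h)),
      natDegree_C, add_zero]
  have hDdeg : D.degree = (k : WithBot ℕ) := by
    rw [degree_eq_natDegree hD0, hDk]
  have hkn : k ≤ n := by
    rw [hk, ← hfn]
    exact natDegree_le_of_dvd (EuclideanDomain.gcd_dvd_left f g) hf
  set f1 := f /ₘ D with hf1d
  set g1 := g /ₘ D with hg1d
  have hf1 : f = D * f1 := by
    conv_lhs => rw [← modByMonic_add_div f D]
    rw [(modByMonic_eq_zero_iff_dvd hDm).2 hDdvf, zero_add]
  have hg1 : g = D * g1 := by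
    conv_lhs => rw [← modByMonic_add_div g D]
    rw [(modByMonic_eq_zero_iff_dvd hDm).2 hDdvg, zero_add]
  have hf10 : f1 ≠ 0 := fun h => hf (by rw [hf1, h, mul_zero])
  have hndf1 : f1.natDegree = n - k := by
    rw [hf1d, natDegree_divByMonic f hDm, hfn, hDk]
  have hndg1 : g1.natDegree ≤ n - k := by
    rw [hg1d, natDegree_divByMonic g hDm, hDk]
    omega
  have hbez := EuclideanDomain.gcd_eq_gcd_ab f g
  have hCeq : C d.leadingCoeff = f1 * EuclideanDomain.gcdA f g + g1 * EuclideanDomain.gcdB f g := by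
    apply mul_left_cancel₀ hD0
    rw [← hDd]
    calc d = f * EuclideanDomain.gcdA f g + g * EuclideanDomain.gcdB f g := hbez
      _ = D * (f1 * EuclideanDomain.gcdA f g + g1 * EuclideanDomain.gcdB f g) := by
          rw [hf1, hg1]; ring
  have hcop : IsCoprime f1 g1 := by
    refine ⟨EuclideanDomain.gcdA f g * C d.leadingCoeff⁻¹,
      EuclideanDomain.gcdB f g * C d.leadingCoeff⁻¹, ?_⟩
    calc EuclideanDomain.gcdA f g * C d.leadingCoeff⁻¹ * f1 +
          EuclideanDomain.gcdB f g * C d.leadingCoeff⁻¹ * g1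
        = C d.leadingCoeff⁻¹ * (f1 * EuclideanDomain.gcdA f g + g1 * EuclideanDomain.gcdB f g) := by
          ring
      _ = C d.leadingCoeff⁻¹ * C d.leadingCoeff := by rw [← hCeq]
      _ = 1 := by rw [← C_mul, inv_mul_cancel₀ hlc, C_1]
  set Φfun : (Fin k → ℂ) → (Fin n → ℂ) :=
    fun w i => ((X ^ n * pol w) /ₘ D).coeff (n - 1 - (i : ℕ)) with hΦfun
  have hΦadd : ∀ w1 w2, Φfun (w1 + w2) = Φfun w1 + Φfun w2 := by
    intro w1 w2
    funext i
    simp only [hΦfun, Pi.add_apply, pol_add, mul_add, divByMonic_add _ _ _ hDm, coeff_add]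
  have hΦsmul : ∀ (c : ℂ) (w : Fin k → ℂ), Φfun (c • w) = c • Φfun w := by
    intro c w
    funext i
    simp only [hΦfun, Pi.smul_apply, pol_smul, mul_smul_comm, divByMonic_smul _ _ _ hDm,
      coeff_smul, smul_eq_mul]
  set Φ : (Fin k → ℂ) →ₗ[ℂ] (Fin n → ℂ) :=
    { toFun := Φfun, map_add' := hΦadd, map_smul' := hΦsmul } with hΦ
  have hmonoX : (X ^ n : ℂ[X]).Monic := monic_X_pow _
  have hX0 : (X ^ n : ℂ[X]) ≠ 0 := pow_ne_zero n X_ne_zero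
  have hvdeg : ∀ t : ℂ[X], t.degree < (k : WithBot ℕ) →
      ((X ^ n * t) /ₘ D).degree < (n : WithBot ℕ) := by
    intro t ht
    rcases eq_or_ne t 0 with rfl | ht0
    · rw [mul_zero, zero_divByMonic, degree_zero]
      exact WithBot.bot_lt_coe n
    · have hndt : t.natDegree < k := (natDegree_lt_iff_degree_lt ht0).2 ht
      have hnd : ((X ^ n * t) /ₘ D).natDegree = n + t.natDegree - k := by
        rw [natDegree_divByMonic _ hDm, natDegree_mul hX0 ht0, natDegree_X_pow, hDk]
      have hle : ((X ^ n * t) /ₘ D).natDegree ≤ n - 1 := by omega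
      calc ((X ^ n * t) /ₘ D).degree ≤ (((X ^ n * t) /ₘ D).natDegree : WithBot ℕ) :=
            degree_le_natDegree
        _ ≤ ((n - 1 : ℕ) : WithBot ℕ) := by exact_mod_cast hle
        _ < (n : WithBot ℕ) := by exact_mod_cast (by omega : n - 1 < n)
  have hdiv : ∀ (p p1 t ρ v : ℂ[X]), p = D * p1 → p1.natDegree ≤ n - k →
      ρ + D * v = X ^ n * t → ρ.degree < D.degree → (p * v) /ₘ X ^ n = p1 * t := by
    intro p p1 t ρ v hp hp1 hdec hρ
    refine (div_modByMonic_unique (p1 * t) (-(p1 * ρ)) hmonoX ⟨?_, ?_⟩).1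
    · rw [hp]; linear_combination (-p1) * hdec
    · rw [degree_neg, degree_X_pow]
      rcases eq_or_ne ρ 0 with rfl | hρ0
      · rw [mul_zero, degree_zero]; exact WithBot.bot_lt_coe n
      · rcases eq_or_ne p1 0 with rfl | hp10
        · rw [zero_mul, degree_zero]; exact WithBot.bot_lt_coe n
        · have h1 : ρ.natDegree < k := by
            rw [hDdeg] at hρ; exact (natDegree_lt_iff_degree_lt hρ0).2 hρ
          have h2 : (p1 * ρ).natDegree ≤ n - 1 := by
            rw [natDegree_mul hp10 hρ0]; omega
          calc (p1 * ρ).degree ≤ ((p1 * ρ).natDegree : WithBot ℕ) := degree_le_natDegree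
            _ ≤ ((n - 1 : ℕ) : WithBot ℕ) := by exact_mod_cast h2
            _ < (n : WithBot ℕ) := by exact_mod_cast (by omega : n - 1 < n)
  have hmem : ∀ w : Fin k → ℂ, (Bz n f g).mulVec (Φfun w) = 0 := by
    intro w
    set t := pol w with htdef
    set v := (X ^ n * t) /ₘ D with hv
    set ρ := (X ^ n * t) %ₘ D with hρdef
    have hdec : ρ + D * v = X ^ n * t := modByMonic_add_div _ _
    have hρd : ρ.degree < D.degree := degree_modByMonic_lt _ hDm
    have hvd : v.degree < (n : WithBot ℕ) := hvdeg t (degree_pol_lt w)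
    have hpu : pol (Φfun w) = v := pol_rev v hvd
    rw [mem_ker_iff (le_of_eq hfn) hgn, hpu,
      hdiv f f1 t ρ v hf1 (le_of_eq hndf1) hdec hρd,
      hdiv g g1 t ρ v hg1 hndg1 hdec hρd, hf1, hg1]
    ring
  have hinj0 : ∀ w : Fin k → ℂ, Φfun w = 0 → w = 0 := by
    intro w hw
    set t := pol w with htdef
    set v := (X ^ n * t) /ₘ D with hv
    have hvd : v.degree < (n : WithBot ℕ) := hvdeg t (degree_pol_lt w)
    have hv0 : v = 0 := by
      ext m
      rw [coeff_zero]
      rcases lt_or_ge m n with hm | hm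
      · have h5 := congrFun hw ⟨n - 1 - m, by omega⟩
        simp only [hΦfun, Pi.zero_apply] at h5
        have hidx : n - 1 - ((⟨n - 1 - m, by omega⟩ : Fin n) : ℕ) = m := by
          simp only [Fin.val_mk]; omega
        rw [hidx] at h5
        exact h5
      · exact coeff_eq_zero_of_degree_lt (lt_of_lt_of_le hvd (by exact_mod_cast hm))
    have hdec : (X ^ n * t) %ₘ D + D * v = X ^ n * t := modByMonic_add_div _ _
    rw [hv0, mul_zero, add_zero] at hdec
    have ht0 : t = 0 := by
      by_contra ht0
      have h1 : ((X ^ n * t) %ₘ D).degree < D.degree := degree_modByMonic_lt _ hDm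
      rw [hdec, hDdeg] at h1
      have h3 : (X ^ n * t).natDegree < k :=
        (natDegree_lt_iff_degree_lt (mul_ne_zero hX0 ht0)).2 h1
      rw [natDegree_mul hX0 ht0, natDegree_X_pow] at h3
      omega
    exact (pol_eq_zero_iff w).1 ht0
  have hsurj : ∀ u : Fin n → ℂ, (Bz n f g).mulVec u = 0 → ∃ w, Φfun w = u := by
    intro u hu
    set v := pol u with hvdef
    have hvd : v.degree < (n : WithBot ℕ) := degree_pol_lt u
    have hcond := (mem_ker_iff (le_of_eq hfn) hgn u).1 hu
    set Qf := (f * v) /ₘ X ^ n with hQf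
    set Qg := (g * v) /ₘ X ^ n with hQg
    have hcond1 : g1 * Qf = f1 * Qg := by
      apply mul_left_cancel₀ hD0
      calc D * (g1 * Qf) = g * Qf := by rw [hg1]; ring
        _ = f * Qg := hcond
        _ = D * (f1 * Qg) := by rw [hf1]; ring
    obtain ⟨t, ht⟩ : f1 ∣ Qf := hcop.dvd_of_dvd_mul_left ⟨Qg, hcond1⟩
    have htdeg : t.degree < (k : WithBot ℕ) := by
      rcases eq_or_ne t 0 with rfl | ht0
      · rw [degree_zero]; exact WithBot.bot_lt_coe k
      · have hQf0 : Qf ≠ 0 := by rw [ht]; exact mul_ne_zero hf10 ht0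
        have hv0 : v ≠ 0 := by
          intro h
          apply hQf0
          rw [hQf, h, mul_zero, zero_divByMonic]
        have hndv : v.natDegree < n := (natDegree_lt_iff_degree_lt hv0).2 hvd
        have hndQf : Qf.natDegree ≤ n - 1 := by
          rw [hQf, natDegree_divByMonic _ hmonoX, natDegree_X_pow,
            natDegree_mul hf hv0, hfn]
          omega
        have h6 : Qf.natDegree = f1.natDegree + t.natDegree := by
          rw [ht, natDegree_mul hf10 ht0]
        have h7 : t.natDegree < k := by omega
        exact (natDegree_lt_iff_degree_lt ht0).1 h7
    set Rf := (f * v) %ₘ X ^ n with hRfdef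
    have hdecf : Rf + X ^ n * Qf = f * v := modByMonic_add_div _ _
    set σ := D * v - X ^ n * t with hσ
    have hfσ : f1 * σ = Rf := by
      rw [hσ]
      linear_combination (-1 : ℂ[X]) * hdecf + (-v) * hf1 + ((X : ℂ[X]) ^ n) * ht
    have hσdeg : σ.degree < D.degree := by
      rcases eq_or_ne σ 0 with h0 | hσ0
      · rw [h0, degree_zero, hDdeg]; exact WithBot.bot_lt_coe k
      · have hRf0 : Rf ≠ 0 := by rw [← hfσ]; exact mul_ne_zero hf10 hσ0
        have h1 : Rf.degree < (n : WithBot ℕ) := by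
          have := degree_modByMonic_lt (f * v) hmonoX
          rwa [degree_X_pow] at this
        have h2 : Rf.natDegree < n := (natDegree_lt_iff_degree_lt hRf0).2 h1
        have h3 : Rf.natDegree = f1.natDegree + σ.natDegree := by
          rw [← hfσ, natDegree_mul hf10 hσ0]
        have h4 : σ.natDegree < k := by omega
        rw [hDdeg]
        exact (natDegree_lt_iff_degree_lt hσ0).1 h4
    have hdivD : (X ^ n * t) /ₘ D = v :=
      (div_modByMonic_unique v (-σ) hDm ⟨by rw [hσ]; ring, by rw [degree_neg]; exact hσdeg⟩).1
    refine ⟨fun i => t.coeff (k - 1 - (i : ℕ)), ?_⟩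
    have hpw : pol (fun i : Fin k => t.coeff (k - 1 - (i : ℕ))) = t := pol_rev t htdeg
    funext i
    simp only [hΦfun]
    rw [hpw, hdivD, hvdef, coeff_pol, dif_pos (by omega : n - 1 - (i : ℕ) < n)]
    congr 1
    ext
    simp only [Fin.val_mk]
    have := i.isLt
    omega
  have hrange : LinearMap.range Φ = LinearMap.ker (Matrix.toLin' (Bz n f g)) := by
    apply le_antisymm
    · rintro x hx
      obtain ⟨w, rfl⟩ := hx
      rw [LinearMap.mem_ker, Matrix.toLin'_apply]
      exact hmem w
    · intro u hu
      rw [LinearMap.mem_ker, Matrix.toLin'_apply] at hu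
      obtain ⟨w, hw⟩ := hsurj u hu
      exact ⟨w, hw⟩
  have hinj : Function.Injective Φ := by
    rw [← LinearMap.ker_eq_bot]
    rw [eq_bot_iff]
    intro w hw
    rw [LinearMap.mem_ker] at hw
    rw [Submodule.mem_bot]
    exact hinj0 w hw
  rw [← hrange, ← LinearEquiv.finrank_eq (LinearEquiv.ofInjective Φ hinj)]
  exact Module.finrank_fin_fun (R := ℂ)

end BezoutianAux

/-- The nullity of the Bezoutian matrix of `f` and `g` (of size `n = max(deg f, deg g)`)
equals the degree of `gcd(f, g)`. -/
theorem bezoutian_nullity (f g : ℂ[X]) (hfg : f ≠ 0 ∨ g ≠ 0)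
    (n : ℕ) (hn : n = max f.natDegree g.natDegree) :
    Module.finrank ℂ (LinearMap.ker (Matrix.toLin' (Bz n f g))) =
      (EuclideanDomain.gcd f g).natDegree := by
  by_cases hcase : f ≠ 0 ∧ g.natDegree ≤ f.natDegree
  · exact main_count f g hcase.1 n
      (by rw [hn]; exact (max_eq_left hcase.2).symm)
      (by rw [hn]; exact le_max_right _ _)
  · have hgf : g ≠ 0 ∧ f.natDegree ≤ g.natDegree := by
      rcases eq_or_ne f 0 with rfl | hf0
      · refine ⟨hfg.resolve_left (fun h => h rfl), ?_⟩
        simp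
      · have : ¬ g.natDegree ≤ f.natDegree := fun h => hcase ⟨hf0, h⟩
        refine ⟨fun hg0 => this (by simp [hg0]), by omega⟩
    have h1 := main_count g f hgf.1 n
      (by rw [hn]; exact (max_eq_right hgf.2).symm)
      (by rw [hn]; exact le_max_left _ _)
    have hswap : Bz n g f = -(Bz n f g) := (neg_sub _ _).symm
    have hker : LinearMap.ker (Matrix.toLin' (Bz n g f))
        = LinearMap.ker (Matrix.toLin' (Bz n f g)) := by
      rw [hswap, map_neg]
      ext u
      simp [LinearMap.mem_ker]
    have hgcd : (EuclideanDomain.gcd g f).natDegree = (EuclideanDomain.gcd f g).natDegree := by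
      have hfg0 : EuclideanDomain.gcd f g ≠ 0 := fun h =>
        hgf.1 (EuclideanDomain.gcd_eq_zero_iff.1 h).2
      have hgf0 : EuclideanDomain.gcd g f ≠ 0 := fun h =>
        hgf.1 (EuclideanDomain.gcd_eq_zero_iff.1 h).1
      have e1 : EuclideanDomain.gcd f g ∣ EuclideanDomain.gcd g f :=
        EuclideanDomain.dvd_gcd (EuclideanDomain.gcd_dvd_right f g)
          (EuclideanDomain.gcd_dvd_left f g)
      have e2 : EuclideanDomain.gcd g f ∣ EuclideanDomain.gcd f g :=
        EuclideanDomain.dvd_gcd (EuclideanDomain.gcd_dvd_right g f)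
          (EuclideanDomain.gcd_dvd_left g f)
      exact le_antisymm (natDegree_le_of_dvd e2 hfg0) (natDegree_le_of_dvd e1 hgf0)
    rw [← hker, h1, hgcd]
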